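/- Suppose G is connected, M is nonempty, M ≠ V, and the subgraph of G induced on M is connected and not bipartite. Then there exists a state ψ that is stationary under U (Uψ = ψ) and satisfies ⟨ψ₀, ψ⟩ ≠ 0. -/

import Mathlib

open Finset

variable {V : Type*} [Fintype V] [DecidableEq V]

/-- The average of the amplitudes of the state `ψ` at vertex `a`:
`avg_ψ(a) = (1/deg a) * ∑_{b ~ a} ψ(a,b)`. -/
noncomputable def avgQ (G : SimpleGraph V) [DecidableRel G.Adj] (ψ : V → V → ℂ) (a : V) : ℂ :=
  (G.degree a : ℂ)⁻¹ * ∑ b ∈ G.neighborFinset a, ψ a b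

/-- The oracle query `Q`: flips the sign of amplitudes at marked vertices. -/
def Qop (M : Finset V) (ψ : V → V → ℂ) : V → V → ℂ :=
  fun a b => if a ∈ M then -ψ a b else ψ a b

/-- The Grover diffusion coin `C`: inversion about the mean at each vertex. -/
noncomputable def Cop (G : SimpleGraph V) [DecidableRel G.Adj] (ψ : V → V → ℂ) : V → V → ℂ :=
  fun a b => 2 * avgQ G ψ a - ψ a b

/-- The flip-flop shift `S`. -/
def Sop (ψ : V → V → ℂ) : V → V → ℂ :=
  fun a b => ψ b a

/-- The quantum walk search operator `U = S ∘ C ∘ Q`. -/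
noncomputable def Uop (G : SimpleGraph V) [DecidableRel G.Adj] (M : Finset V)
    (ψ : V → V → ℂ) : V → V → ℂ :=
  Sop (Cop G (Qop M ψ))

/-- A state is stationary under `U` if `Uψ = ψ` on every dart of `G`. -/
def StationaryU (G : SimpleGraph V) [DecidableRel G.Adj] (M : Finset V)
    (ψ : V → V → ℂ) : Prop :=
  ∀ a b, G.Adj a b → Uop G M ψ a b = ψ a b

/-- The inner product of two states, summing over all darts of `G`. -/
noncomputable def dInner (G : SimpleGraph V) [DecidableRel G.Adj] (φ ψ : V → V → ℂ) : ℂ :=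
  ∑ a : V, ∑ b ∈ G.neighborFinset a, (starRingEnd ℂ) (φ a b) * ψ a b

/-- The initial uniform state, assigning `1/√(2|E|)` to every dart. -/
noncomputable def psi0 (G : SimpleGraph V) [DecidableRel G.Adj] : V → V → ℂ :=
  fun _ _ => (((Real.sqrt (2 * (G.edgeFinset.card : ℝ)))⁻¹ : ℝ) : ℂ)

/-- Key linear-algebra lemma: on a connected non-bipartite induced subgraph, any
prescribed vertex sums supported on `M` can be realized by a symmetric edge weighting. -/
theorem exists_weight (G : SimpleGraph V) [DecidableRel G.Adj] (M : Finset V)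
    (hMconn : (G.induce (M : Set V)).Connected)
    (hMnbip : ¬ ∃ X : Set (M : Set V), ∀ a b, (G.induce (M : Set V)).Adj a b →
      (a ∈ X ↔ b ∉ X))
    (s : V → ℝ) (hs : ∀ b, b ∉ M → s b = 0) :
    ∃ w : V → V → ℝ, (∀ a b, w a b = w b a) ∧
      (∀ b, b ∈ M → ∑ x ∈ G.neighborFinset b, (if x ∈ M then w b x else 0) = s b) := by
  classical
  set gen : V × V → EuclideanSpace ℝ V := fun p =>
    if p.1 ∈ M ∧ p.2 ∈ M ∧ G.Adj p.1 p.2 then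
      EuclideanSpace.single p.1 1 + EuclideanSpace.single p.2 1 else 0 with hgen
  set R : Submodule ℝ (EuclideanSpace ℝ V) := Submodule.span ℝ (Set.range gen) with hR
  -- every element of `Rᗮ` vanishes on `M`
  have hvanish : ∀ g ∈ Rᗮ, ∀ a ∈ M, g a = 0 := by
    intro g hg
    have hedge : ∀ a b : V, a ∈ M → b ∈ M → G.Adj a b → g a + g b = 0 := by
      intro a b ha hb hab
      have h1 : (inner ℝ (gen (a, b)) g : ℝ) = 0 :=
        (Submodule.mem_orthogonal R g).mp hg _ (Submodule.subset_span (Set.mem_range_self _))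
      have h2 : gen (a, b) = EuclideanSpace.single a 1 + EuclideanSpace.single b 1 := by
        simp only [hgen]
        exact if_pos ⟨ha, hb, hab⟩
      rw [h2, inner_add_left, EuclideanSpace.inner_single_left,
        EuclideanSpace.inner_single_left] at h1
      simpa using h1
    intro a ha
    by_contra hga
    -- |g| is constant on `M`
    have habs : ∀ x y : (M : Set V), |g ↑x| = |g ↑y| := by
      intro x y
      obtain ⟨p⟩ := hMconn.preconnected x y
      induction p with
      | nil => rfl
      | @cons u v z h q ih =>
        have hadj : G.Adj ↑u ↑v := h
        have := hedge ↑u ↑v (Finset.mem_coe.mp u.2) (Finset.mem_coe.mp v.2) hadj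
        have huv : g ↑u = -g ↑v := by linarith
        rw [huv, abs_neg]
        exact ih
    have hne : ∀ x : (M : Set V), g ↑x ≠ 0 := by
      intro x hx0
      apply hga
      have := habs ⟨a, Finset.mem_coe.mpr ha⟩ x
      rw [hx0, abs_zero] at this
      exact abs_eq_zero.mp this
    exact hMnbip ⟨{x | 0 < g ↑x}, by
      intro x y hxy
      have hadj : G.Adj ↑x ↑y := hxy
      have hsum := hedge ↑x ↑y (Finset.mem_coe.mp x.2) (Finset.mem_coe.mp y.2) hadj
      have hx := hne x
      have hy := hne y
      simp only [Set.mem_setOf_eq]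
      constructor
      · intro h1 h2
        linarith
      · intro h1
        rcases lt_or_gt_of_ne hy with h2 | h2
        · linarith
        · exact absurd h2 h1⟩
  -- `s` lies in the span `R`
  have hsR : (WithLp.toLp 2 s : EuclideanSpace ℝ V) ∈ R := by
    rw [← Submodule.orthogonal_orthogonal R]
    rw [Submodule.mem_orthogonal]
    intro g hg
    rw [PiLp.inner_apply]
    apply Finset.sum_eq_zero
    intro x _
    by_cases hx : x ∈ M
    · have := hvanish g hg x hx
      simp [this]
    · have : s x = 0 := hs x hx
      simp [RCLike.inner_apply, this]
  rw [hR, Submodule.mem_span_range_iff_exists_fun] at hsR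
  obtain ⟨c, hc⟩ := hsR
  refine ⟨fun a b => if a ∈ M ∧ b ∈ M ∧ G.Adj a b then c (a, b) + c (b, a) else 0, ?_, ?_⟩
  · intro a b
    dsimp only
    by_cases h : a ∈ M ∧ b ∈ M ∧ G.Adj a b
    · rw [if_pos h, if_pos ⟨h.2.1, h.1, h.2.2.symm⟩]; ring
    · rw [if_neg h, if_neg (fun h' => h ⟨h'.2.1, h'.1, h'.2.2.symm⟩)]
  · intro b hb
    dsimp only
    have hcb : (∑ p : V × V, c p • gen p) b = s b := congrArg (fun v : EuclideanSpace ℝ V => v b) hc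
    rw [show ((∑ p : V × V, c p • gen p) b) = ∑ p : V × V, c p * gen p b from by
      rw [show ((∑ p : V × V, c p • gen p) b) = ∑ p : V × V, (c p • gen p) b from
        by rw [WithLp.ofLp_sum, Finset.sum_apply]]
      rfl] at hcb
    have hcb' : (∑ p : V × V, c p * gen p b) = s b := hcb
    rw [← hcb']
    have hgenval : ∀ p : V × V, gen p b =
        (if p.1 ∈ M ∧ p.2 ∈ M ∧ G.Adj p.1 p.2 then
          ((if b = p.1 then (1:ℝ) else 0) + (if b = p.2 then (1:ℝ) else 0)) else 0) := by
      intro p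
      simp only [hgen]
      by_cases h : p.1 ∈ M ∧ p.2 ∈ M ∧ G.Adj p.1 p.2
      · rw [if_pos h, if_pos h]
        rw [show ((EuclideanSpace.single p.1 (1:ℝ) + EuclideanSpace.single p.2 (1:ℝ)) b)
            = EuclideanSpace.single p.1 (1:ℝ) b + EuclideanSpace.single p.2 (1:ℝ) b from rfl]
        rw [EuclideanSpace.single_apply, EuclideanSpace.single_apply]
      · rw [if_neg h, if_neg h]; rfl
    have hrw1 : (∑ p : V × V, c p * gen p b) = ∑ x : V, ∑ y : V, c (x, y) *
        (if x ∈ M ∧ y ∈ M ∧ G.Adj x y then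
          ((if b = x then (1:ℝ) else 0) + (if b = y then (1:ℝ) else 0)) else 0) := by
      rw [Fintype.sum_prod_type]
      exact Finset.sum_congr rfl fun x _ => Finset.sum_congr rfl fun y _ => by
        rw [hgenval (x, y)]
    have step : ∀ x : V, (∑ y : V, c (x, y) *
        (if x ∈ M ∧ y ∈ M ∧ G.Adj x y then
          ((if b = x then (1:ℝ) else 0) + (if b = y then (1:ℝ) else 0)) else 0))
        = (if b = x then (∑ y : V, if y ∈ M ∧ G.Adj x y then c (x, y) else 0) else 0)
          + (if b ∈ M ∧ G.Adj x b ∧ x ∈ M then c (x, b) else 0) := by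
      intro x
      have hsplit : ∀ y : V, c (x, y) *
          (if x ∈ M ∧ y ∈ M ∧ G.Adj x y then
            ((if b = x then (1:ℝ) else 0) + (if b = y then (1:ℝ) else 0)) else 0)
          = (if b = x then (if y ∈ M ∧ G.Adj x y then c (x, y) else 0) else 0)
            + (if y = b then (if y ∈ M ∧ G.Adj x y ∧ x ∈ M then c (x, y) else 0) else 0) := by
        intro y
        by_cases h1 : x ∈ M ∧ y ∈ M ∧ G.Adj x y
        · rw [if_pos h1]
          obtain ⟨hxM, hyM, hadj⟩ := h1
          by_cases hbx : b = x
          · subst hbx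
            by_cases hby : y = b
            · exact absurd (hby ▸ hadj) (G.loopless.irrefl b)
            · have hby' : ¬ b = y := fun h => hby h.symm
              simp [hby, hby', hyM, hadj]
          · by_cases hby : y = b
            · subst hby
              simp [hbx, hb, hadj, hxM]
            · have hby' : ¬ b = y := fun h => hby h.symm
              simp [hbx, hby, hby']
        · rw [if_neg h1, mul_zero]
          have hz1 : (if b = x then (if y ∈ M ∧ G.Adj x y then c (x, y) else 0) else 0)
              = (0:ℝ) := by
            by_cases hbx : b = x
            · rw [if_pos hbx, if_neg (fun h2 => h1 ⟨hbx ▸ hb, h2⟩)]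
            · rw [if_neg hbx]
          have hz2 : (if y = b then (if y ∈ M ∧ G.Adj x y ∧ x ∈ M then c (x, y) else 0) else 0)
              = (0:ℝ) := by
            by_cases hby : y = b
            · rw [if_pos hby, if_neg (fun h2 => h1 ⟨h2.2.2, h2.1, h2.2.1⟩)]
            · rw [if_neg hby]
          rw [hz1, hz2, add_zero]
      rw [Finset.sum_congr rfl (fun y _ => hsplit y), Finset.sum_add_distrib]
      congr 1
      · by_cases hbx : b = x <;> simp [hbx]
      · rw [Finset.sum_ite_eq' Finset.univ b
          (fun y => if y ∈ M ∧ G.Adj x y ∧ x ∈ M then c (x, y) else 0)]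
        simp
    rw [hrw1, Finset.sum_congr rfl (fun x _ => step x), Finset.sum_add_distrib]
    rw [Finset.sum_ite_eq Finset.univ b
      (fun x => ∑ y : V, if y ∈ M ∧ G.Adj x y then c (x, y) else 0)]
    simp only [Finset.mem_univ, if_true]
    rw [SimpleGraph.neighborFinset_eq_filter, Finset.sum_filter, ← Finset.sum_add_distrib]
    apply Finset.sum_congr rfl
    intro x _
    by_cases hax : G.Adj b x
    · by_cases hxM : x ∈ M
      · rw [if_pos hax, if_pos hxM, if_pos ⟨hb, hxM, hax⟩, if_pos ⟨hxM, hax⟩,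
          if_pos ⟨hb, hax.symm, hxM⟩]
      · rw [if_pos hax, if_neg hxM, if_neg (fun h2 : x ∈ M ∧ _ => hxM h2.1),
          if_neg (fun h2 : _ ∧ _ ∧ x ∈ M => hxM h2.2.2), add_zero]
    · rw [if_neg hax, if_neg (fun h2 : _ ∧ G.Adj b x => hax h2.2),
        if_neg (fun h2 : _ ∧ G.Adj x b ∧ _ => hax h2.2.1.symm), add_zero]

/-- If the marked vertices form a connected non-bipartite induced subgraph (and `M ≠ V`),
then there is a stationary state with nonzero overlap with the initial uniform state. -/
theorem nonbipartite_marked_stationary_exists (G : SimpleGraph V) [DecidableRel G.Adj]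
    (M : Finset V) (hdeg : ∀ v, 0 < G.degree v) (hconn : G.Connected)
    (hM : M.Nonempty) (hMne : M ≠ Finset.univ)
    (hMconn : (G.induce (M : Set V)).Connected)
    (hMnbip : ¬ ∃ X : Set (M : Set V), ∀ a b, (G.induce (M : Set V)).Adj a b →
      (a ∈ X ↔ b ∉ X)) :
    ∃ ψ : V → V → ℂ, StationaryU G M ψ ∧ dInner G (psi0 G) ψ ≠ 0 := by
  classical
  obtain ⟨w, hwsymm, hwsum⟩ := exists_weight G M hMconn hMnbip
    (fun b => if b ∈ M then -(∑ x ∈ G.neighborFinset b, (if x ∈ M then (0:ℝ) else 1)) else 0)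
    (fun b hb => if_neg hb)
  have key : ∀ b ∈ M, (∑ x ∈ G.neighborFinset b, (if x ∈ M then w b x else (1:ℝ))) = 0 := by
    intro b hb
    have h1 := hwsum b hb
    rw [if_pos hb] at h1
    have h2 : ∀ x : V, (if x ∈ M then w b x else (1:ℝ))
        = (if x ∈ M then w b x else 0) + (if x ∈ M then 0 else 1) := by
      intro x; by_cases hx : x ∈ M <;> simp [hx]
    rw [Finset.sum_congr rfl (fun x _ => h2 x), Finset.sum_add_distrib, h1]
    ring
  set ψ : V → V → ℂ := fun a b => ((if a ∈ M ∧ b ∈ M then w a b else 1 : ℝ) : ℂ) with hψ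
  have hpsisymm : ∀ a b : V, ψ a b = ψ b a := by
    intro a b
    simp only [hψ]
    by_cases ha : a ∈ M <;> by_cases hb : b ∈ M <;> simp [ha, hb, hwsymm a b]
  have keyC : ∀ b ∈ M, (∑ x ∈ G.neighborFinset b, ψ b x) = 0 := by
    intro b hb
    simp only [hψ]
    rw [show (∑ x ∈ G.neighborFinset b, (((if b ∈ M ∧ x ∈ M then w b x else 1 : ℝ)):ℂ))
        = ((∑ x ∈ G.neighborFinset b, (if b ∈ M ∧ x ∈ M then w b x else 1 : ℝ) : ℝ) : ℂ) from by
      push_cast; rfl]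
    rw [show (∑ x ∈ G.neighborFinset b, (if b ∈ M ∧ x ∈ M then w b x else 1 : ℝ))
        = ∑ x ∈ G.neighborFinset b, (if x ∈ M then w b x else 1 : ℝ) from
      Finset.sum_congr rfl (fun x _ => by by_cases hx : x ∈ M <;> simp [hx, hb])]
    rw [key b hb]
    norm_num
  refine ⟨ψ, ?_, ?_⟩
  · intro a b hab
    show 2 * avgQ G (Qop M ψ) b - Qop M ψ b a = ψ a b
    by_cases hbM : b ∈ M
    · have havg : avgQ G (Qop M ψ) b = 0 := by
        simp only [avgQ, Qop]
        rw [show (∑ x ∈ G.neighborFinset b, (if b ∈ M then -ψ b x else ψ b x))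
            = ∑ x ∈ G.neighborFinset b, -ψ b x from
          Finset.sum_congr rfl (fun x _ => if_pos hbM)]
        rw [Finset.sum_neg_distrib, keyC b hbM]
        simp
      rw [havg]
      simp only [Qop]
      rw [if_pos hbM, hpsisymm a b]
      ring
    · have h1 : ∀ x, Qop M ψ b x = 1 := by
        intro x
        simp only [Qop, hψ]
        rw [if_neg hbM, if_neg (fun h : b ∈ M ∧ _ => hbM h.1)]
        norm_num
      have havg : avgQ G (Qop M ψ) b = 1 := by
        simp only [avgQ]
        rw [Finset.sum_congr rfl (fun x _ => h1 x), Finset.sum_const,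
          SimpleGraph.card_neighborFinset_eq_degree, nsmul_eq_mul, mul_one]
        exact inv_mul_cancel₀ (Nat.cast_ne_zero.mpr (hdeg b).ne')
      rw [havg, h1 a]
      simp only [hψ]
      rw [if_neg (fun h : _ ∧ b ∈ M => hbM h.2)]
      norm_num
  · obtain ⟨a0, ha0⟩ : ∃ a, a ∉ M := by
      by_contra h
      push_neg at h
      exact hMne (Finset.eq_univ_iff_forall.mpr h)
    have hinner : ∀ a : V, (∑ b ∈ G.neighborFinset a, ψ a b)
        = (if a ∈ M then 0 else (G.degree a : ℂ)) := by
      intro a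
      by_cases ha : a ∈ M
      · rw [if_pos ha, keyC a ha]
      · rw [if_neg ha]
        rw [show (∑ b ∈ G.neighborFinset a, ψ a b) = ∑ b ∈ G.neighborFinset a, (1:ℂ) from
          Finset.sum_congr rfl (fun x _ => by
            simp only [hψ]; rw [if_neg (fun h : a ∈ M ∧ _ => ha h.1)]; norm_num)]
        rw [Finset.sum_const, SimpleGraph.card_neighborFinset_eq_degree]
        simp
    have hT : (∑ a : V, ∑ b ∈ G.neighborFinset a, ψ a b)
        = ∑ a : V, (if a ∈ M then 0 else (G.degree a : ℂ)) :=
      Finset.sum_congr rfl (fun a _ => hinner a)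
    have hTpos : (0:ℝ) < ∑ a : V, (if a ∈ M then (0:ℝ) else (G.degree a : ℝ)) := by
      apply Finset.sum_pos'
      · intro a _
        by_cases ha : a ∈ M <;> simp [ha]
      · refine ⟨a0, Finset.mem_univ a0, ?_⟩
        rw [if_neg ha0]
        exact_mod_cast hdeg a0
    have hTne : (∑ a : V, (if a ∈ M then (0:ℂ) else (G.degree a : ℂ))) ≠ 0 := by
      rw [show (∑ a : V, (if a ∈ M then (0:ℂ) else (G.degree a : ℂ)))
          = ((∑ a : V, (if a ∈ M then (0:ℝ) else (G.degree a : ℝ)) : ℝ) : ℂ) from by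
        push_cast
        apply Finset.sum_congr rfl
        intro a _
        by_cases ha : a ∈ M <;> simp [ha]]
      exact_mod_cast hTpos.ne'
    have hEpos : 0 < G.edgeFinset.card := by
      obtain ⟨b0, hb0⟩ := (G.degree_pos_iff_exists_adj a0).mp (hdeg a0)
      exact Finset.card_pos.mpr ⟨s(a0, b0), SimpleGraph.mem_edgeFinset.mpr hb0⟩
    have hu : ((Real.sqrt (2 * (G.edgeFinset.card : ℝ)))⁻¹ : ℝ) ≠ 0 := by
      have h2 : (0:ℝ) < Real.sqrt (2 * (G.edgeFinset.card : ℝ)) := by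
        apply Real.sqrt_pos.mpr
        have : (0:ℝ) < (G.edgeFinset.card : ℝ) := by exact_mod_cast hEpos
        linarith
      positivity
    show (∑ a : V, ∑ b ∈ G.neighborFinset a, (starRingEnd ℂ) (psi0 G a b) * ψ a b) ≠ 0
    rw [show (∑ a : V, ∑ b ∈ G.neighborFinset a, (starRingEnd ℂ) (psi0 G a b) * ψ a b)
        = (((Real.sqrt (2 * (G.edgeFinset.card : ℝ)))⁻¹ : ℝ) : ℂ)
          * ∑ a : V, ∑ b ∈ G.neighborFinset a, ψ a b from by
      rw [Finset.mul_sum]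
      apply Finset.sum_congr rfl
      intro a _
      rw [Finset.mul_sum]
      apply Finset.sum_congr rfl
      intro b _
      simp only [psi0]
      rw [Complex.conj_ofReal]]
    rw [hT]
    exact mul_ne_zero (Complex.ofReal_ne_zero.mpr hu) hTne
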